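/- Fix an integer k ≥ 1 and a constant C₀ < ∞. There exists C < ∞ such that for every λ ∈ (0,1) and all real numbers c₁, c₂ with |c₁ − λ^{−1/2}| ≤ C₀ and |c₂ − λ^{−1/2}| ≤ C₀, one has |(1 − γ^k)/(λ + 1 − γ) + ½ (c₁ (1 − γ^k) + c₂ (1 − γ^{−k}))| ≤ C, where γ = ((λ+2) − √(λ² + 4λ))/2. -/

import Mathlib

/-- `γ = ((λ+2) - √(λ²+4λ))/2`. -/
noncomputable def gam (lam : ℝ) : ℝ :=
  ((lam + 2) - Real.sqrt (lam ^ 2 + 4 * lam)) / 2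

lemma one_sub_pow_le_aux (x : ℝ) (hx0 : 0 ≤ x) (hx1 : x ≤ 1) :
    ∀ n : ℕ, 1 - x ^ n ≤ n * (1 - x) := by
  intro n
  induction n with
  | zero => simp
  | succ n ih =>
      have hxn : x ^ n ≤ 1 := pow_le_one₀ hx0 hx1
      have hxn0 : 0 ≤ x ^ n := pow_nonneg hx0 n
      push_cast
      rw [pow_succ]
      nlinarith

/-- Uniform boundedness of the resolvent difference: for fixed `k ≥ 1` and `C₀ < ∞` there
is `C < ∞` such that for all `λ ∈ (0,1)` and all `c₁, c₂` with `|cᵢ - λ^{-1/2}| ≤ C₀`,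
`|(1 - γᵏ)/(λ + 1 - γ) + ½(c₁(1 - γᵏ) + c₂(1 - γ⁻ᵏ))| ≤ C`. -/
theorem resolvent_difference_uniformly_bounded (k : ℕ) (hk : 1 ≤ k) (C₀ : ℝ) :
    ∃ C : ℝ, ∀ lam : ℝ, lam ∈ Set.Ioo (0 : ℝ) 1 → ∀ c₁ c₂ : ℝ,
      |c₁ - lam ^ (-(1 / 2) : ℝ)| ≤ C₀ → |c₂ - lam ^ (-(1 / 2) : ℝ)| ≤ C₀ →
      |(1 - gam lam ^ k) / (lam + 1 - gam lam) +
          (c₁ * (1 - gam lam ^ k) + c₂ * (1 - gam lam ^ (-(k : ℤ)))) / 2| ≤ C := by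
  refine ⟨(k : ℝ) + (2 * k * (C₀ + 1) + 3 ^ k * (2 * k * (C₀ + 1))) / 2, ?_⟩
  rintro lam ⟨h0, h1⟩ c₁ c₂ hcc₁ hcc₂
  set D := Real.sqrt (lam ^ 2 + 4 * lam) with hDdef
  have hDnn : 0 ≤ D := Real.sqrt_nonneg _
  have hD2 : D ^ 2 = lam ^ 2 + 4 * lam := Real.sq_sqrt (by nlinarith)
  have hgdef : gam lam = ((lam + 2) - D) / 2 := rfl
  -- basic bounds on D
  have hD_lt : D < lam + 2 := by nlinarith
  have hlam_lt_D : lam < D := by nlinarith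
  have hg_pos : 0 < gam lam := by rw [hgdef]; linarith
  have hg_lt1 : gam lam < 1 := by rw [hgdef]; linarith
  -- sqrt lam facts
  set s := Real.sqrt lam with hsdef
  have hs_pos : 0 < s := Real.sqrt_pos.mpr h0
  have hs2 : s ^ 2 = lam := Real.sq_sqrt h0.le
  have hs1 : s < 1 := by
    have := Real.sqrt_lt_sqrt h0.le h1
    rwa [Real.sqrt_one] at this
  -- D ≤ 3 s
  have hD_le : D ≤ 3 * s := by
    have h9 : D ≤ Real.sqrt ((3 * s) ^ 2) := by
      apply Real.sqrt_le_sqrt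
      nlinarith
    rwa [Real.sqrt_sq (by positivity)] at h9
  -- 1 - g ≤ 2 s
  have h1g : 1 - gam lam ≤ 2 * s := by rw [hgdef]; nlinarith
  -- g > 1/3
  have hg_gt : (1 : ℝ) / 3 < gam lam := by
    have hDlt : D < lam + 4 / 3 := by nlinarith
    rw [hgdef]; linarith
  -- powers of g
  have hgk_pos : 0 < gam lam ^ k := pow_pos hg_pos k
  have hgk_le1 : gam lam ^ k ≤ 1 := pow_le_one₀ hg_pos.le hg_lt1.le
  have hgk_ge : (1 / 3 : ℝ) ^ k ≤ gam lam ^ k :=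
    pow_le_pow_left₀ (by norm_num) hg_gt.le k
  set A := 1 - gam lam ^ k with hAdef
  have hA_nn : 0 ≤ A := by simp [hAdef]; linarith
  have hA_le : A ≤ k * (1 - gam lam) := one_sub_pow_le_aux _ hg_pos.le hg_lt1.le k
  have hk1 : (1 : ℝ) ≤ (k : ℝ) := by exact_mod_cast hk
  have hA_le2 : A ≤ 2 * k * s := by nlinarith
  -- rpow rewrite
  have hrp : lam ^ (-(1 / 2) : ℝ) = s⁻¹ := by
    rw [Real.rpow_neg h0.le, ← Real.sqrt_eq_rpow]
  rw [hrp] at hcc₁ hcc₂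
  have hC0 : 0 ≤ C₀ := le_trans (abs_nonneg _) hcc₁
  have hsinv : s⁻¹ * s = 1 := inv_mul_cancel₀ hs_pos.ne'
  have hc₁ : |c₁| ≤ C₀ + s⁻¹ := by
    have := abs_sub_abs_le_abs_sub c₁ s⁻¹
    have habss : |s⁻¹| = s⁻¹ := abs_of_pos (by positivity)
    calc |c₁| ≤ |c₁ - s⁻¹| + |s⁻¹| := by
          have := abs_add_le (c₁ - s⁻¹) s⁻¹; simpa using this
      _ ≤ C₀ + s⁻¹ := by rw [habss]; linarith
  have hc₂ : |c₂| ≤ C₀ + s⁻¹ := by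
    have habss : |s⁻¹| = s⁻¹ := abs_of_pos (by positivity)
    calc |c₂| ≤ |c₂ - s⁻¹| + |s⁻¹| := by
          have := abs_add_le (c₂ - s⁻¹) s⁻¹; simpa using this
      _ ≤ C₀ + s⁻¹ := by rw [habss]; linarith
  -- bound |c₁ * A|
  have hprod : (C₀ + s⁻¹) * (2 * k * s) ≤ 2 * k * (C₀ + 1) := by
    have e1 : (C₀ + s⁻¹) * (2 * k * s) = 2 * k * C₀ * s + 2 * k * (s⁻¹ * s) := by ring
    rw [hsinv] at e1
    have h2 : 2 * k * C₀ * s ≤ 2 * k * C₀ * 1 :=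
      mul_le_mul_of_nonneg_left hs1.le (by positivity)
    rw [e1]; linarith
  have hb1 : |c₁ * A| ≤ 2 * k * (C₀ + 1) := by
    rw [abs_mul, abs_of_nonneg hA_nn]
    calc |c₁| * A ≤ (C₀ + s⁻¹) * (2 * k * s) := by
          apply mul_le_mul hc₁ hA_le2 hA_nn (by positivity)
      _ ≤ 2 * k * (C₀ + 1) := hprod
  -- the inverse power term
  have hz : gam lam ^ (-(k : ℤ)) = (gam lam ^ k)⁻¹ := by
    rw [zpow_neg, zpow_natCast]
  have hinv_ge1 : 1 ≤ (gam lam ^ k)⁻¹ := (one_le_inv₀ hgk_pos).2 hgk_le1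
  have hinv_le : (gam lam ^ k)⁻¹ ≤ 3 ^ k := by
    rw [← one_div]
    rw [div_le_iff₀ hgk_pos]
    calc (1 : ℝ) = 3 ^ k * (1 / 3 : ℝ) ^ k := by
          rw [← mul_pow]; norm_num
      _ ≤ 3 ^ k * gam lam ^ k := by
          apply mul_le_mul_of_nonneg_left hgk_ge (by positivity)
  have habs2 : |1 - (gam lam ^ k)⁻¹| = A * (gam lam ^ k)⁻¹ := by
    rw [abs_sub_comm, abs_of_nonneg (by linarith)]
    field_simp [hAdef]
    exact hAdef.symm
  have hb2 : |c₂ * (1 - (gam lam ^ k)⁻¹)| ≤ 3 ^ k * (2 * k * (C₀ + 1)) := by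
    rw [abs_mul, habs2]
    have h3k : (0:ℝ) < 3 ^ k := by positivity
    calc |c₂| * (A * (gam lam ^ k)⁻¹) ≤ (C₀ + s⁻¹) * (2 * k * s * 3 ^ k) := by
          apply mul_le_mul hc₂ ?_ (by positivity) (by positivity)
          calc A * (gam lam ^ k)⁻¹ ≤ (2 * k * s) * 3 ^ k := by
                apply mul_le_mul hA_le2 hinv_le (by positivity) (by positivity)
            _ = 2 * k * s * 3 ^ k := by ring
      _ = (C₀ + s⁻¹) * (2 * k * s) * 3 ^ k := by ring
      _ ≤ 2 * k * (C₀ + 1) * 3 ^ k := by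
          apply mul_le_mul_of_nonneg_right hprod h3k.le
      _ = 3 ^ k * (2 * k * (C₀ + 1)) := by ring
  -- first term bound
  have hden : 0 < lam + 1 - gam lam := by linarith
  have hb0 : |A / (lam + 1 - gam lam)| ≤ (k : ℝ) := by
    rw [abs_of_nonneg (by positivity)]
    rw [div_le_iff₀ hden]
    have e : (k : ℝ) * (lam + 1 - gam lam) = k * (1 - gam lam) + k * lam := by ring
    have h2 : 0 ≤ (k : ℝ) * lam := by positivity
    rw [e]; linarith
  -- combine
  rw [hz]
  calc |A / (lam + 1 - gam lam) + (c₁ * A + c₂ * (1 - (gam lam ^ k)⁻¹)) / 2|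
      ≤ |A / (lam + 1 - gam lam)| + |(c₁ * A + c₂ * (1 - (gam lam ^ k)⁻¹)) / 2| :=
        abs_add_le _ _
    _ ≤ (k : ℝ) + (|c₁ * A| + |c₂ * (1 - (gam lam ^ k)⁻¹)|) / 2 := by
        refine add_le_add hb0 ?_
        rw [abs_div, show |(2:ℝ)| = 2 by norm_num]
        have := abs_add_le (c₁ * A) (c₂ * (1 - (gam lam ^ k)⁻¹))
        linarith
    _ ≤ (k : ℝ) + (2 * k * (C₀ + 1) + 3 ^ k * (2 * k * (C₀ + 1))) / 2 := by
        have := hb1; have := hb2; linarith
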